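/- Let X be a vector space over ℝ such that the cardinality of a Hamel basis of X over ℚ (i.e., the dimension of X as a ℚ-vector space) equals the cardinality of X. Let A ⊆ X be a set such that 0 ∈ A and for every x ∈ A also −x ∈ A. Then there exists a set B ⊆ X such that S(B) = A, where the spectre is taken with respect to the additive group (X,+). -/

import Mathlib

open Cardinal Ordinal Submodule Set

namespace SpectreAux

variable {X : Type*} [AddCommGroup X] [Module ℚ X]

/-- Midpoint closure of the forbidden generators `x c ± c` for `c ∉ A`,
taking midpoints only when the half-difference lies in `A`. -/
inductive Fhat (A : Set X) (x : X → X) : X → Prop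
  | pos (c : X) (hc : c ∉ A) : Fhat A x (x c + c)
  | neg (c : X) (hc : c ∉ A) : Fhat A x (x c - c)
  | mid (f g : X) (hf : Fhat A x f) (hg : Fhat A x g)
      (ha : (2:ℚ)⁻¹ • (f - g) ∈ A) : Fhat A x ((2:ℚ)⁻¹ • (f + g))

/-- Points reachable from `v` by steps `y ↦ y + a` (`a ∈ A`), steered to
avoid the forbidden set `F`. -/
inductive Reach (A F : Set X) (v : X) : X → Prop
  | base : Reach A F v v
  | pos (y a : X) (h : Reach A F v y) (ha : a ∈ A) (h2 : y + a ∉ F) : Reach A F v (y + a)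
  | neg (y a : X) (h : Reach A F v y) (ha : a ∈ A) (h2 : y + a ∈ F) : Reach A F v (y - a)

end SpectreAux

/-- The spectre of a set `A` in an abelian group. -/
def spectre {X : Type*} [AddCommGroup X] (A : Set X) : Set X :=
  {z | ∀ x ∈ A, x + z ∈ A ∨ x - z ∈ A}

theorem exists_set_with_spectre {X : Type*} [AddCommGroup X] [Module ℝ X]
    [Module ℚ X] [IsScalarTower ℚ ℝ X]
    (hcard : Module.rank ℚ X = Cardinal.mk X)
    (A : Set X) (h0 : (0 : X) ∈ A) (hsym : ∀ x ∈ A, -x ∈ A) :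
    ∃ B : Set X, spectre B = A := by
  classical
  -- X is nontrivial
  have hnt : Nontrivial X := by
    by_contra h
    have hsub : Subsingleton X := not_nontrivial_iff_subsingleton.mp h
    have h1 : Module.rank ℚ X = 0 := by
      rw [rank_eq_zero_iff]
      intro v
      exact ⟨1, one_ne_zero, by rw [Subsingleton.elim ((1:ℚ) • v) 0]⟩
    rw [h1] at hcard
    exact Cardinal.mk_ne_zero X hcard.symm
  -- X is infinite
  have hinf : Infinite X := by
    obtain ⟨v, hv⟩ := exists_ne (0 : X)
    refine Infinite.of_injective (fun q : ℚ => q • v) ?_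
    intro a b hab
    have hab' : a • v = b • v := hab
    by_contra hne
    have h1 : (a - b) • v = 0 := by rw [sub_smul]; exact sub_eq_zero_of_eq hab'
    have h2 : a - b ≠ 0 := sub_ne_zero.mpr hne
    apply hv
    calc v = (a - b)⁻¹ • ((a - b) • v) := by
            rw [smul_smul, inv_mul_cancel₀ h2, one_smul]
      _ = 0 := by rw [h1, smul_zero]
  have haleph : ℵ₀ ≤ #X := Cardinal.aleph0_le_mk X
  -- freshness
  have fresh : ∀ S : Set X, #S < #X → ∃ v, v ∉ span ℚ S := by
    intro S hS
    by_contra h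
    push_neg at h
    have htop : span ℚ S = ⊤ := eq_top_iff'.mpr h
    have h1 : Module.rank ℚ X ≤ #S := by
      have h2 := rank_span_le (R := ℚ) (M := X) S
      rwa [htop, rank_top] at h2
    rw [hcard] at h1
    exact absurd h1 (not_le.mpr hS)
  -- a well-order of minimal type
  obtain ⟨r, wo, hr⟩ := Cardinal.ord_eq X
  haveI := wo
  have hwf : WellFounded r := wo.toIsWellFounded.wf
  -- cardinality bound on the avoided sets
  have hbound : ∀ (c : X) (ih : ∀ b, r b c → X),
      #((Set.range fun b : {b // r b c} => ih b.1 b.2) ∪ ({b | r b c} ∪ {c}) : Set X) < #X := by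
    intro c ih
    have h1 : #({b | r b c} : Set X) < #X := by
      have h2 := Cardinal.card_typein_lt (r := r) c hr
      rw [Ordinal.card_typein] at h2; exact h2
    have h2 : #(Set.range fun b : {b // r b c} => ih b.1 b.2) < #X :=
      lt_of_le_of_lt (Cardinal.mk_range_le) h1
    have h3 : #({c} : Set X) < #X := by
      rw [Cardinal.mk_singleton]
      exact lt_of_lt_of_le Cardinal.one_lt_aleph0 haleph
    calc #((Set.range fun b : {b // r b c} => ih b.1 b.2) ∪ ({b | r b c} ∪ {c}) : Set X)
        ≤ #(Set.range fun b : {b // r b c} => ih b.1 b.2) + #(({b | r b c} ∪ {c}) : Set X) :=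
          Cardinal.mk_union_le _ _
      _ ≤ #(Set.range fun b : {b // r b c} => ih b.1 b.2) +
            (#({b | r b c} : Set X) + #({c} : Set X)) := by
          gcongr
          exact Cardinal.mk_union_le _ _
      _ < #X := Cardinal.add_lt_of_lt haleph h2 (Cardinal.add_lt_of_lt haleph h1 h3)
  -- transfinite construction of the fresh points
  obtain ⟨x, hx⟩ : ∃ x : X → X, ∀ c, x c ∉ span ℚ
      ((Set.range fun b : {b // r b c} => x b.1) ∪ ({b | r b c} ∪ {c})) := by
    refine ⟨hwf.fix (fun c ih => Classical.choose (fresh _ (hbound c ih))), fun c => ?_⟩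
    have h : hwf.fix (fun c ih => Classical.choose (fresh _ (hbound c ih))) c
        = Classical.choose (fresh _ (hbound c (fun b _ =>
            hwf.fix (fun c ih => Classical.choose (fresh _ (hbound c ih))) b))) :=
      hwf.fix_eq _ c
    rw [h]
    exact Classical.choose_spec (fresh _ (hbound c (fun b _ =>
      hwf.fix (fun c ih => Classical.choose (fresh _ (hbound c ih))) b)))
  set V : X → Submodule ℚ X := fun c =>
    span ℚ ((Set.range fun b : {b // r b c} => x b.1) ∪ ({b | r b c} ∪ {c})) with hV
  have hxV : ∀ c, x c ∉ V c := hx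
  have hself : ∀ c, c ∈ V c := fun c =>
    subset_span (Or.inr (Or.inr rfl))
  have hmem_b : ∀ {b c}, r b c → b ∈ V c := fun {b c} h =>
    subset_span (Or.inr (Or.inl h))
  have hmem_xb : ∀ {b c}, r b c → x b ∈ V c := fun {b c} h =>
    subset_span (Or.inl ⟨⟨b, h⟩, rfl⟩)
  have hVmono : ∀ {b c}, r b c → V b ≤ V c := by
    intro b c hbc
    rw [hV]
    apply span_le.mpr
    rintro v (⟨⟨a, ha⟩, rfl⟩ | (ha | ha))
    · exact hmem_xb (IsTrans.trans _ _ _ ha hbc)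
    · exact hmem_b (IsTrans.trans _ _ _ ha hbc)
    · rw [ha]; exact hmem_b hbc
  -- the Good invariant
  set Good : X → Prop := fun f => ∃ (c : X) (q : ℚ), c ∉ A ∧ 0 < q ∧ q ≤ 1 ∧
    f - q • x c ∈ V c ∧ (q = 1 → f = x c + c ∨ f = x c - c) with hGoodDef
  have hGood : ∀ f, SpectreAux.Fhat A x f → Good f := by
    intro f hf
    induction hf with
    | pos c hc =>
      refine ⟨c, 1, hc, one_pos, le_refl _, ?_, fun _ => Or.inl rfl⟩
      have e : (x c + c) - (1:ℚ) • x c = c := by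
        rw [one_smul]; abel
      rw [e]; exact hself c
    | neg c hc =>
      refine ⟨c, 1, hc, one_pos, le_refl _, ?_, fun _ => Or.inr rfl⟩
      have e : (x c - c) - (1:ℚ) • x c = -c := by
        rw [one_smul]; abel
      rw [e]; exact neg_mem (hself c)
    | mid f g hfF hgF ha ihf ihg =>
      obtain ⟨c1, q1, hc1, hq1pos, hq1le, hmem1, hone1⟩ := ihf
      obtain ⟨c2, q2, hc2, hq2pos, hq2le, hmem2, hone2⟩ := ihg
      rcases @trichotomous _ r _ c1 c2 with hlt | heq | hgt
      · -- r c1 c2 : use c2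
        refine ⟨c2, (2:ℚ)⁻¹ * q2, hc2, by positivity, by linarith, ?_, by intro h; linarith⟩
        have e : (2:ℚ)⁻¹ • (f + g) - ((2:ℚ)⁻¹ * q2) • x c2 =
            (2:ℚ)⁻¹ • (g - q2 • x c2) + (2:ℚ)⁻¹ • (q1 • x c1) + (2:ℚ)⁻¹ • (f - q1 • x c1) := by
          module
        rw [e]
        exact add_mem (add_mem (smul_mem _ _ hmem2)
          (smul_mem _ _ (smul_mem _ _ (hmem_xb hlt)))) (smul_mem _ _ (hVmono hlt hmem1))
      · -- c1 = c2
        subst heq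
        refine ⟨c1, (2:ℚ)⁻¹ * (q1 + q2), hc1, by positivity, by linarith, ?_, ?_⟩
        · have e : (2:ℚ)⁻¹ • (f + g) - ((2:ℚ)⁻¹ * (q1 + q2)) • x c1 =
              (2:ℚ)⁻¹ • (f - q1 • x c1) + (2:ℚ)⁻¹ • (g - q2 • x c1) := by
            module
          rw [e]
          exact add_mem (smul_mem _ _ hmem1) (smul_mem _ _ hmem2)
        · intro h
          have hq1 : q1 = 1 := by linarith
          have hq2 : q2 = 1 := by linarith
          rcases hone1 hq1 with hf' | hf' <;> rcases hone2 hq2 with hg' | hg'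
          · left; rw [hf', hg']; module
          · exfalso
            have e2 : (2:ℚ)⁻¹ • (f - g) = c1 := by rw [hf', hg']; module
            rw [e2] at ha
            exact hc1 ha
          · exfalso
            have e2 : (2:ℚ)⁻¹ • (f - g) = -c1 := by rw [hf', hg']; module
            rw [e2] at ha
            have := hsym _ ha
            rw [neg_neg] at this
            exact hc1 this
          · right; rw [hf', hg']; module
      · -- r c2 c1 : use c1
        refine ⟨c1, (2:ℚ)⁻¹ * q1, hc1, by positivity, by linarith, ?_, by intro h; linarith⟩
        have e : (2:ℚ)⁻¹ • (f + g) - ((2:ℚ)⁻¹ * q1) • x c1 =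
            (2:ℚ)⁻¹ • (f - q1 • x c1) + (2:ℚ)⁻¹ • (q2 • x c2) + (2:ℚ)⁻¹ • (g - q2 • x c2) := by
          module
        rw [e]
        exact add_mem (add_mem (smul_mem _ _ hmem1)
          (smul_mem _ _ (smul_mem _ _ (hmem_xb hgt)))) (smul_mem _ _ (hVmono hgt hmem2))
  -- no x c₀ is forbidden
  have hxnot : ∀ c₀, ¬ SpectreAux.Fhat A x (x c₀) := by
    intro c₀ hcon
    obtain ⟨c, q, hc, hq0, hq1, hmem, hone⟩ := hGood _ hcon
    have hqne : q ≠ 0 := ne_of_gt hq0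
    rcases @trichotomous _ r _ c₀ c with hlt | heq | hgt
    · -- r c₀ c : then x c ∈ V c, contradiction
      have h1 : x c₀ ∈ V c := hmem_xb hlt
      have h2 : q • x c ∈ V c := by
        have h3 := sub_mem h1 hmem
        have e : x c₀ - (x c₀ - q • x c) = q • x c := by abel
        rwa [e] at h3
      have h4 := smul_mem (V c) q⁻¹ h2
      rw [smul_smul, inv_mul_cancel₀ hqne, one_smul] at h4
      exact hxV c h4
    · subst heq
      by_cases hq : q = 1
      · rcases hone hq with h1 | h1
        · have : c₀ = 0 := by
            have := left_eq_add.mp h1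
            exact this
          rw [this] at hc
          exact hc h0
        · have : c₀ = 0 := by
            have h2 : x c₀ - c₀ = x c₀ := h1.symm
            exact sub_eq_self.mp h2
          rw [this] at hc
          exact hc h0
      · have e : x c₀ - q • x c₀ = (1 - q) • x c₀ := by module
        rw [e] at hmem
        have h4 := smul_mem (V c₀) (1 - q)⁻¹ hmem
        rw [smul_smul, inv_mul_cancel₀ (sub_ne_zero.mpr (Ne.symm hq)), one_smul] at h4
        exact hxV c₀ h4
    · -- r c c₀
      have h1 : q • x c ∈ V c₀ := smul_mem _ _ (hmem_xb hgt)
      have h2 : x c₀ - q • x c ∈ V c₀ := hVmono hgt hmem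
      have h3 := add_mem h1 h2
      have e : q • x c + (x c₀ - q • x c) = x c₀ := by abel
      rw [e] at h3
      exact hxV c₀ h3
  -- the forbidden set and cells
  set Fset : Set X := {f | SpectreAux.Fhat A x f} with hFset
  set B : Set X := {v | ∃ c, c ∉ A ∧ SpectreAux.Reach A Fset (x c) v} with hB
  -- reached points are never forbidden
  have hReachNot : ∀ c₀ y, SpectreAux.Reach A Fset (x c₀) y → y ∉ Fset := by
    intro c₀ y hre
    induction hre with
    | base => exact hxnot c₀
    | pos y a h ha h2 ih => exact h2
    | neg y a h ha h2 ih =>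
      intro hcon
      have e2 : (2:ℚ)⁻¹ • ((y + a) - (y - a)) = a := by module
      have hmid := SpectreAux.Fhat.mid (y + a) (y - a) h2 hcon (by rw [e2]; exact ha)
      have e3 : (2:ℚ)⁻¹ • ((y + a) + (y - a)) = y := by module
      rw [e3] at hmid
      exact ih hmid
  refine ⟨B, ?_⟩
  ext z
  simp only [spectre, Set.mem_setOf_eq]
  constructor
  · intro hz
    by_contra hzA
    have hxzB : x z ∈ B := ⟨z, hzA, SpectreAux.Reach.base⟩
    rcases hz (x z) hxzB with h1 | h1
    · obtain ⟨c, hc, hre⟩ := h1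
      exact hReachNot c _ hre (SpectreAux.Fhat.pos z hzA)
    · obtain ⟨c, hc, hre⟩ := h1
      exact hReachNot c _ hre (SpectreAux.Fhat.neg z hzA)
  · intro hz v hv
    obtain ⟨c, hc, hre⟩ := hv
    by_cases hF : v + z ∈ Fset
    · right
      exact ⟨c, hc, SpectreAux.Reach.neg v z hre hz hF⟩
    · left
      exact ⟨c, hc, SpectreAux.Reach.pos v z hre hz hF⟩
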